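/- Let a, b > 0. Then limsup_{λ→∞} ( card{(m,n) ∈ ℤ_{≥0} × ℤ_{≥1} : (2m+1)²π²/(16a²) + n²π²/(4b²) ≤ λ} − (ab/π)λ − (b/π)√λ ) / √λ ≤ 0; that is, the number of such lattice points is at most (ab/π)λ + (b/π)√λ + o(√λ) as λ → ∞. -/

import Mathlib

open Filter Real intervalIntegral

lemma quarter_circle : ∫ x in (0:ℝ)..1, Real.sqrt (1 - x ^ 2) = π / 4 := by
  have hcont : Continuous fun x : ℝ => Real.sqrt (1 - x ^ 2) := by fun_prop
  have hneg : (∫ x in (-1:ℝ)..0, Real.sqrt (1 - x ^ 2))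
      = ∫ x in (0:ℝ)..1, Real.sqrt (1 - x ^ 2) := by
    have := intervalIntegral.integral_comp_neg (a := (0:ℝ)) (b := 1)
      (fun x : ℝ => Real.sqrt (1 - x ^ 2))
    simp only [neg_zero] at this
    rw [← this]
    simp
  have hadd : (∫ x in (-1:ℝ)..0, Real.sqrt (1 - x ^ 2))
      + (∫ x in (0:ℝ)..1, Real.sqrt (1 - x ^ 2))
      = ∫ x in (-1:ℝ)..1, Real.sqrt (1 - x ^ 2) :=
    intervalIntegral.integral_add_adjacent_intervals
      (hcont.intervalIntegrable _ _) (hcont.intervalIntegrable _ _)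
  rw [integral_sqrt_one_sub_sq] at hadd
  rw [hneg] at hadd
  linarith

lemma quarter_circle_scaled (T : ℝ) (hT : 0 < T) :
    ∫ x in (0:ℝ)..T, Real.sqrt (T ^ 2 - x ^ 2) = π / 4 * T ^ 2 := by
  have h1 : ∀ x : ℝ, Real.sqrt (T ^ 2 - x ^ 2) = T * Real.sqrt (1 - (x * T⁻¹) ^ 2) := by
    intro x
    rw [show T ^ 2 - x ^ 2 = T ^ 2 * (1 - (x * T⁻¹) ^ 2) by field_simp]
    rw [Real.sqrt_mul (sq_nonneg T), Real.sqrt_sq hT.le]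
  simp only [h1]
  rw [intervalIntegral.integral_const_mul]
  rw [intervalIntegral.integral_comp_mul_right (fun u => Real.sqrt (1 - u ^ 2))
    (inv_ne_zero hT.ne')]
  simp [mul_inv_cancel₀ hT.ne', quarter_circle]
  field_simp

set_option maxHeartbeats 1600000 in
/-- Upper bound for counting lattice points `(m,n)`, `m ≥ 0`, `n ≥ 1`, with
`(2m+1)²π²/(16a²) + n²π²/(4b²) ≤ λ`: the count is at most
`(ab/π)λ + (b/π)√λ + o(√λ)` as `λ → ∞`. -/
theorem lattice_count_mixed_upper (a b : ℝ) (ha : 0 < a) (hb : 0 < b) :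
    ∀ ε > 0, ∀ᶠ (lam : ℝ) in atTop,
      ((Nat.card {p : ℕ × ℕ | 1 ≤ p.2 ∧
          (2 * (p.1 : ℝ) + 1) ^ 2 * π ^ 2 / (16 * a ^ 2)
            + (p.2 : ℝ) ^ 2 * π ^ 2 / (4 * b ^ 2) ≤ lam} : ℝ))
        ≤ a * b / π * lam + b / π * Real.sqrt lam + ε * Real.sqrt lam := by
  intro ε hε
  filter_upwards [eventually_ge_atTop (1:ℝ)] with lam hlam
  have hπ : (0:ℝ) < π := pi_pos
  set S : Set (ℕ × ℕ) := {p : ℕ × ℕ | 1 ≤ p.2 ∧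
      (2 * (p.1 : ℝ) + 1) ^ 2 * π ^ 2 / (16 * a ^ 2)
        + (p.2 : ℝ) ^ 2 * π ^ 2 / (4 * b ^ 2) ≤ lam} with hS_def
  set c : ℝ := π / (2 * b) with hc_def
  set d : ℝ := 4 * a / π with hd_def
  set r : ℝ := Real.sqrt lam with hr_def
  set T : ℝ := r / c with hT_def
  set N : ℕ := ⌊T⌋₊ with hN_def
  set f : ℝ → ℝ := fun x => Real.sqrt (lam - c ^ 2 * x ^ 2) with hf_def
  set K : ℕ → ℕ := fun n => ⌊(d * f n + 1) / 2⌋₊ with hK_def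
  set Tset : Finset (ℕ × ℕ) :=
    (Finset.Icc 1 N).biUnion
      (fun n => (Finset.range (K n)).image (fun m => (m, n))) with hTset_def
  clear_value S c d r T N f K Tset
  have hc : 0 < c := by rw [hc_def]; positivity
  have hd : 0 < d := by rw [hd_def]; positivity
  have hr0 : 0 ≤ r := by rw [hr_def]; exact Real.sqrt_nonneg _
  have hr1 : 1 ≤ r := by
    rw [hr_def, show (1:ℝ) = Real.sqrt 1 by simp]
    exact Real.sqrt_le_sqrt hlam
  have hr2 : r ^ 2 = lam := by rw [hr_def]; exact Real.sq_sqrt (by linarith)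
  have hT : 0 < T := by rw [hT_def]; exact div_pos (by linarith) hc
  have hNT : (N : ℝ) ≤ T := by rw [hN_def]; exact Nat.floor_le hT.le
  have hfcont : Continuous f := by rw [hf_def]; fun_prop
  have hfnonneg : ∀ x, 0 ≤ f x := by
    intro x; rw [hf_def]; exact Real.sqrt_nonneg _
  have hceq : ∀ n : ℕ, (n : ℝ) ^ 2 * π ^ 2 / (4 * b ^ 2) = c ^ 2 * (n : ℝ) ^ 2 := by
    intro n; rw [hc_def]; field_simp; ring
  have hKreal : ∀ n : ℕ, (K n : ℝ) ≤ d / 2 * f n + 1 / 2 := by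
    intro n
    have hdf : 0 ≤ d * f n := mul_nonneg hd.le (hfnonneg n)
    have h := Nat.floor_le (by linarith : (0:ℝ) ≤ (d * f n + 1) / 2)
    have hKn : K n = ⌊(d * f n + 1) / 2⌋₊ := by rw [hK_def]
    rw [hKn]
    exact h.trans (by linarith)
  have hsum1 : ((∑ n ∈ Finset.Icc 1 N, K n : ℕ) : ℝ)
      ≤ d / 2 * (∑ n ∈ Finset.Icc 1 N, f n) + N / 2 := by
    push_cast
    calc (∑ n ∈ Finset.Icc 1 N, (K n : ℝ))
        ≤ ∑ n ∈ Finset.Icc 1 N, (d / 2 * f n + 1 / 2) :=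
          Finset.sum_le_sum fun n _ => hKreal n
      _ = d / 2 * (∑ n ∈ Finset.Icc 1 N, f n) + N / 2 := by
          rw [Finset.sum_add_distrib, ← Finset.mul_sum, Finset.sum_const, Nat.card_Icc]
          simp
          ring
  have hant : AntitoneOn f (Set.Icc (0:ℝ) (0 + N)) := by
    intro x hx y hy hxy
    rw [hf_def]
    apply Real.sqrt_le_sqrt
    have hx2 : x ^ 2 ≤ y ^ 2 := pow_le_pow_left₀ hx.1 hxy 2
    nlinarith [sq_nonneg c]
  have hsum2 : (∑ n ∈ Finset.Icc 1 N, f n) ≤ ∫ x in (0:ℝ)..(0 + N), f x := by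
    have h := hant.sum_le_integral
    refine le_trans (le_of_eq ?_) h
    rw [← Finset.Ico_add_one_right_eq_Icc, Finset.sum_Ico_eq_sum_range]
    apply Finset.sum_congr rfl
    intro i _
    push_cast
    ring_nf
  have hint2 : (∫ x in (0:ℝ)..(0 + N), f x) ≤ ∫ x in (0:ℝ)..T, f x := by
    have hadd : (∫ x in (0:ℝ)..(N:ℝ), f x) + (∫ x in (N:ℝ)..T, f x)
        = ∫ x in (0:ℝ)..T, f x :=
      intervalIntegral.integral_add_adjacent_intervals
        (hfcont.intervalIntegrable _ _) (hfcont.intervalIntegrable _ _)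
    have hnn : 0 ≤ ∫ x in (N:ℝ)..T, f x :=
      intervalIntegral.integral_nonneg hNT (fun x _ => hfnonneg x)
    simp only [zero_add]
    linarith
  have hval : (∫ x in (0:ℝ)..T, f x) = π / 4 * lam / c := by
    have h1 : ∀ x : ℝ, f x = c * Real.sqrt (T ^ 2 - x ^ 2) := by
      intro x
      simp only [hf_def]
      rw [show lam - c ^ 2 * x ^ 2 = c ^ 2 * (T ^ 2 - x ^ 2) by
        rw [hT_def]; field_simp; linarith [hr2]]
      rw [Real.sqrt_mul (sq_nonneg c), Real.sqrt_sq hc.le]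
    calc (∫ x in (0:ℝ)..T, f x) = ∫ x in (0:ℝ)..T, c * Real.sqrt (T ^ 2 - x ^ 2) :=
          intervalIntegral.integral_congr (fun x _ => h1 x)
      _ = c * ∫ x in (0:ℝ)..T, Real.sqrt (T ^ 2 - x ^ 2) :=
          intervalIntegral.integral_const_mul _ _
      _ = c * (π / 4 * T ^ 2) := by rw [quarter_circle_scaled T hT]
      _ = π / 4 * lam / c := by
          rw [hT_def, div_pow, ← hr2]
          field_simp
  have hsum3 : (∑ n ∈ Finset.Icc 1 N, f n) ≤ π / 4 * lam / c :=
    le_trans hsum2 (le_trans hint2 (le_of_eq hval))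
  have hsub : S ⊆ ↑Tset := by
    rintro ⟨m, n⟩ hp
    rw [hS_def] at hp
    obtain ⟨hn1, hmn⟩ := hp
    simp only [Set.mem_setOf_eq] at hn1 hmn
    have hterm1 : 0 ≤ (2 * (m : ℝ) + 1) ^ 2 * π ^ 2 / (16 * a ^ 2) := by positivity
    have hcn : c ^ 2 * (n : ℝ) ^ 2 ≤ lam := by
      have := hceq n
      linarith
    have hnN : n ≤ N := by
      rw [hN_def]
      apply Nat.le_floor
      rw [hT_def, le_div_iff₀ hc]
      have h1 : ((n:ℝ) * c) ^ 2 ≤ r ^ 2 := by rw [hr2]; nlinarith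
      calc (n:ℝ) * c = Real.sqrt (((n:ℝ) * c) ^ 2) := (Real.sqrt_sq (by positivity)).symm
        _ ≤ Real.sqrt (r ^ 2) := Real.sqrt_le_sqrt h1
        _ = r := Real.sqrt_sq hr0
    have hmK : m < K n := by
      have hnn : 0 ≤ lam - c ^ 2 * (n : ℝ) ^ 2 := by linarith
      have hfn : (f n) ^ 2 = lam - c ^ 2 * (n : ℝ) ^ 2 := by
        rw [hf_def]; exact Real.sq_sqrt hnn
      have h2 : (2 * (m : ℝ) + 1) ^ 2 * π ^ 2 / (16 * a ^ 2)
          ≤ lam - c ^ 2 * (n : ℝ) ^ 2 := by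
        have := hceq n
        linarith
      rw [div_le_iff₀ (by positivity)] at h2
      have hsq : (2 * (m : ℝ) + 1) ^ 2 ≤ (d * f n) ^ 2 := by
        rw [mul_pow, hfn, hd_def, div_pow, div_mul_eq_mul_div, le_div_iff₀ (by positivity)]
        nlinarith
      have hle : 2 * (m : ℝ) + 1 ≤ d * f n := by
        have h0 : (0:ℝ) ≤ 2 * (m : ℝ) + 1 := by positivity
        have h1 : (0:ℝ) ≤ d * f n := mul_nonneg hd.le (hfnonneg n)
        nlinarith
      have hfl : m + 1 ≤ ⌊(d * f n + 1) / 2⌋₊ :=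
        Nat.le_floor (by push_cast; linarith : ((m + 1 : ℕ) : ℝ) ≤ (d * f n + 1) / 2)
      have : K n = ⌊(d * f n + 1) / 2⌋₊ := by rw [hK_def]
      omega
    rw [hTset_def]
    simp only [Finset.coe_biUnion, Set.mem_iUnion, Finset.mem_coe,
      Finset.mem_Icc, Finset.mem_image, Finset.mem_range]
    exact ⟨n, ⟨hn1, hnN⟩, m, hmK, rfl⟩
  have hcard : Nat.card S ≤ ∑ n ∈ Finset.Icc 1 N, K n := by
    calc Nat.card S = S.ncard := Nat.card_coe_set_eq _
      _ ≤ Set.ncard (↑Tset : Set (ℕ × ℕ)) := Set.ncard_le_ncard hsub Tset.finite_toSet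
      _ = Tset.card := Set.ncard_coe_finset _
      _ ≤ ∑ n ∈ Finset.Icc 1 N, K n := by
          rw [hTset_def]
          refine le_trans Finset.card_biUnion_le (Finset.sum_le_sum fun n _ => ?_)
          exact le_trans Finset.card_image_le (by simp)
  have hmain : ((Nat.card S : ℕ) : ℝ) ≤ d / 2 * (π / 4 * lam / c) + T / 2 := by
    have h0 : ((Nat.card S : ℕ) : ℝ) ≤ ((∑ n ∈ Finset.Icc 1 N, K n : ℕ) : ℝ) :=
      Nat.cast_le.mpr hcard
    have hmul : d / 2 * (∑ n ∈ Finset.Icc 1 N, f n) ≤ d / 2 * (π / 4 * lam / c) :=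
      mul_le_mul_of_nonneg_left hsum3 (by positivity)
    linarith
  have heq1 : d / 2 * (π / 4 * lam / c) = a * b / π * lam := by
    rw [hd_def, hc_def]; field_simp
  have heq2 : T / 2 = b / π * r := by
    rw [hT_def, hc_def]; field_simp
  rw [heq1, heq2] at hmain
  have hpos : 0 ≤ ε * r := mul_nonneg hε.le (by linarith)

  linarith
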